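/- arXiv:2206.09947 — 3 statements merged into one kernel-verified Lean document; each statement's English description precedes it below -/
import Mathlib

section
/- The operator norm of the Volterra operator V on L²[0,1] equals 2/π. -/
open MeasureTheory Real
open ENNReal NNReal

noncomputable def m : Measure ℝ := volume.restrict (Set.Icc 0 1)

instance : IsFiniteMeasure m :=
  ⟨by simp [m, Real.volume_Icc]⟩

lemma cos_prim (x : ℝ) : ∫ t in (0:ℝ)..x, Real.cos (π * t / 2) = 2 / π * Real.sin (π * x / 2) := by
  have h : ∀ t : ℝ, π * t / 2 = (π/2) * t := fun t => by ring
  simp_rw [h]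
  rw [intervalIntegral.integral_comp_mul_left (fun u => Real.cos u) (by positivity : (π/2:ℝ) ≠ 0)]
  rw [integral_cos]
  simp only [mul_zero, Real.sin_zero, sub_zero, smul_eq_mul]
  field_simp

lemma sin_prim (t : ℝ) : ∫ x in t..(1:ℝ), Real.sin (π * x / 2) = 2 / π * Real.cos (π * t / 2) := by
  have h : ∀ x : ℝ, π * x / 2 = (π/2) * x := fun x => by ring
  simp_rw [h]
  rw [intervalIntegral.integral_comp_mul_left (fun u => Real.sin u) (by positivity : (π/2:ℝ) ≠ 0)]
  rw [integral_sin]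
  rw [mul_one, Real.cos_pi_div_two]
  simp only [smul_eq_mul, sub_zero]
  field_simp

lemma sin_sq_int : ∫ t in (0:ℝ)..1, Real.sin (π * t / 2) ^ 2 = 1/2 := by
  have h : ∀ t : ℝ, π * t / 2 = (π/2) * t := fun t => by ring
  simp_rw [h]
  rw [intervalIntegral.integral_comp_mul_left (fun u => Real.sin u ^ 2) (by positivity : (π/2:ℝ) ≠ 0)]
  rw [integral_sin_sq]
  simp [Real.sin_pi_div_two, Real.cos_pi_div_two]
  field_simp

lemma cos_sq_int : ∫ t in (0:ℝ)..1, Real.cos (π * t / 2) ^ 2 = 1/2 := by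
  have h : ∀ t : ℝ, π * t / 2 = (π/2) * t := fun t => by ring
  simp_rw [h]
  rw [intervalIntegral.integral_comp_mul_left (fun u => Real.cos u ^ 2) (by positivity : (π/2:ℝ) ≠ 0)]
  rw [integral_cos_sq]
  simp [Real.sin_pi_div_two, Real.cos_pi_div_two]
  field_simp

lemma m_restrict_Ioc {x : ℝ} (hx : x ∈ Set.Icc (0:ℝ) 1) :
    m.restrict (Set.Ioc 0 x) = volume.restrict (Set.Ioc 0 x) := by
  rw [show m = volume.restrict (Set.Icc 0 1) from rfl,
    Measure.restrict_restrict measurableSet_Ioc,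
    Set.inter_eq_left.mpr fun t ht => Set.mem_Icc.mpr ⟨ht.1.le, ht.2.trans hx.2⟩]

lemma m_restrict_Ici {t : ℝ} (ht : t ∈ Set.Icc (0:ℝ) 1) :
    m.restrict (Set.Ici t) = volume.restrict (Set.Icc t 1) := by
  rw [show m = volume.restrict (Set.Icc 0 1) from rfl,
    Measure.restrict_restrict measurableSet_Ici]
  congr 1
  ext x
  simp only [Set.mem_inter_iff, Set.mem_Ici, Set.mem_Icc]
  exact ⟨fun ⟨h1, _, h3⟩ => ⟨h1, h3⟩, fun ⟨h1, h2⟩ => ⟨h1, ht.1.trans h1, h2⟩⟩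

lemma int_cos_Ioc {x : ℝ} (hx : x ∈ Set.Icc (0:ℝ) 1) :
    ∫ t in Set.Ioc 0 x, Real.cos (π * t / 2) = 2 / π * Real.sin (π * x / 2) := by
  rw [← intervalIntegral.integral_of_le hx.1]
  exact cos_prim x

lemma int_sin_Icc {t : ℝ} (ht : t ∈ Set.Icc (0:ℝ) 1) :
    ∫ x in Set.Icc t 1, Real.sin (π * x / 2) = 2 / π * Real.cos (π * t / 2) := by
  rw [MeasureTheory.integral_Icc_eq_integral_Ioc, ← intervalIntegral.integral_of_le ht.2]
  exact sin_prim t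

lemma ofReal_norm_eq_coe_nnnorm {E : Type*} [SeminormedAddGroup E] (x : E) :
    ENNReal.ofReal ‖x‖ = (‖x‖₊ : ℝ≥0∞) := ofReal_norm x

lemma eLpNorm_two (g : ℝ → ℂ) (μ : Measure ℝ) :
    eLpNorm g 2 μ = (∫⁻ a, (‖g a‖₊ : ℝ≥0∞) ^ 2 ∂μ) ^ (1/2 : ℝ) := by
  rw [eLpNorm_eq_lintegral_rpow_enorm_toReal two_ne_zero ENNReal.ofNat_ne_top]
  rw [show ((2:ℝ≥0∞).toReal) = (2:ℝ) by simp]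
  congr 1
  refine lintegral_congr fun a => ?_
  rw [show (2:ℝ) = ((2:ℕ):ℝ) by norm_num, ENNReal.rpow_natCast]
  rfl

lemma eLpNorm_ofReal (g : ℝ → ℝ) (hc : Continuous g) :
    eLpNorm (fun t => (g t : ℂ)) 2 m = ENNReal.ofReal (∫ t in (0:ℝ)..1, g t ^ 2) ^ (1/2 : ℝ) := by
  rw [eLpNorm_two]
  congr 1
  have h1 : ∀ a : ℝ, (‖(g a : ℂ)‖₊ : ℝ≥0∞) ^ 2 = ENNReal.ofReal (g a ^ 2) := by
    intro a
    rw [← ofReal_norm_eq_coe_nnnorm, ← ENNReal.ofReal_pow (norm_nonneg _)]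
    congr 1
    rw [Complex.norm_real, Real.norm_eq_abs, sq_abs]
  simp_rw [h1]
  rw [← ofReal_integral_eq_lintegral_ofReal]
  · congr 1
    rw [show m = volume.restrict (Set.Icc 0 1) from rfl]
    rw [MeasureTheory.integral_Icc_eq_integral_Ioc, ← intervalIntegral.integral_of_le zero_le_one]
  · exact ((hc.pow 2).integrableOn_Icc).congr_set_ae (by rfl)
  · exact ae_of_all _ fun t => sq_nonneg _

noncomputable def P (t : ℝ) : ℝ≥0∞ := ENNReal.ofReal (Real.cos (π * t / 2))
noncomputable def Q (x : ℝ) : ℝ≥0∞ := ENNReal.ofReal (Real.sin (π * x / 2))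

lemma P_meas : Measurable P :=
  ENNReal.measurable_ofReal.comp (by fun_prop)

lemma Q_meas : Measurable Q :=
  ENNReal.measurable_ofReal.comp (by fun_prop)

lemma P_ne_zero {t : ℝ} (h0 : 0 ≤ t) (h1 : t < 1) : P t ≠ 0 := by
  have hπ := Real.pi_pos
  refine (ENNReal.ofReal_pos.mpr ?_).ne'
  exact Real.cos_pos_of_mem_Ioo ⟨by nlinarith, by nlinarith⟩

lemma cos_nonneg01 {t : ℝ} (h0 : 0 ≤ t) (h1 : t ≤ 1) : 0 ≤ Real.cos (π * t / 2) := by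
  have hπ := Real.pi_pos
  exact Real.cos_nonneg_of_mem_Icc ⟨by nlinarith, by nlinarith⟩

lemma sin_nonneg01 {t : ℝ} (h0 : 0 ≤ t) (h1 : t ≤ 1) : 0 ≤ Real.sin (π * t / 2) := by
  have hπ := Real.pi_pos
  exact Real.sin_nonneg_of_nonneg_of_le_pi (by nlinarith) (by nlinarith)

lemma lint_P_Ioc {x : ℝ} (hx : x ∈ Set.Icc (0:ℝ) 1) :
    ∫⁻ t in Set.Ioc 0 x, P t = ENNReal.ofReal (2/π) * Q x := by
  have hπ := Real.pi_pos
  simp only [P, Q]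
  rw [← ofReal_integral_eq_lintegral_ofReal]
  · rw [int_cos_Ioc hx, ENNReal.ofReal_mul (by positivity)]
  · exact (Continuous.integrableOn_Icc (by fun_prop)).mono_set Set.Ioc_subset_Icc_self
  · refine (ae_restrict_iff' measurableSet_Ioc).mpr (ae_of_all _ fun t ht => ?_)
    exact cos_nonneg01 ht.1.le (ht.2.trans hx.2)

lemma lint_Q_Ici {t : ℝ} (ht : t ∈ Set.Icc (0:ℝ) 1) :
    ∫⁻ x in Set.Ici t, Q x ∂m = ENNReal.ofReal (2/π) * P t := by
  have hπ := Real.pi_pos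
  rw [m_restrict_Ici ht]
  simp only [P, Q]
  rw [← ofReal_integral_eq_lintegral_ofReal]
  · rw [int_sin_Icc ht, ENNReal.ofReal_mul (by positivity)]
  · exact Continuous.integrableOn_Icc (by fun_prop)
  · refine (ae_restrict_iff' measurableSet_Icc).mpr (ae_of_all _ fun x hx => ?_)
    exact sin_nonneg01 (ht.1.trans hx.1) hx.2

lemma rpow_two_eq (μ : Measure ℝ) (h : ℝ → ℝ≥0∞) :
    (∫⁻ a, h a ^ (2:ℝ) ∂μ) = ∫⁻ a, h a ^ 2 ∂μ :=
  lintegral_congr fun a => by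
    rw [show (2:ℝ) = ((2:ℕ):ℝ) by norm_num, ENNReal.rpow_natCast]

lemma lintegral_cs (μ : Measure ℝ) (f g : ℝ → ℝ≥0∞)
    (hf : AEMeasurable f μ) (hg : AEMeasurable g μ) :
    (∫⁻ a, f a * g a ∂μ) ^ 2 ≤ (∫⁻ a, f a ^ 2 ∂μ) * (∫⁻ a, g a ^ 2 ∂μ) := by
  have hpq : Real.HolderConjugate 2 2 := Real.HolderConjugate.two_two
  have h := ENNReal.lintegral_mul_le_Lp_mul_Lq μ hpq hf hg
  simp only [Pi.mul_apply] at h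
  rw [rpow_two_eq, rpow_two_eq] at h
  calc (∫⁻ a, f a * g a ∂μ) ^ 2
      ≤ ((∫⁻ a, f a ^ 2 ∂μ) ^ (1/2:ℝ) * (∫⁻ a, g a ^ 2 ∂μ) ^ (1/2:ℝ)) ^ 2 := by
        gcongr
    _ = (∫⁻ a, f a ^ 2 ∂μ) * (∫⁻ a, g a ^ 2 ∂μ) := by
        rw [mul_pow, ← ENNReal.rpow_natCast (_ ^ (1/2:ℝ)) 2,
          ← ENNReal.rpow_natCast ((∫⁻ a, g a ^ 2 ∂μ) ^ (1/2:ℝ)) 2,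
          ← ENNReal.rpow_mul, ← ENNReal.rpow_mul]
        norm_num

lemma upper (f : ℝ → ℂ) (hf : AEStronglyMeasurable f m) :
    eLpNorm (fun x => ∫ t in Set.Ioc 0 x, f t ∂m) 2 m ≤ ENNReal.ofReal (2/π) * eLpNorm f 2 m := by
  have hπ := Real.pi_pos
  have hfm : AEMeasurable (fun t => (‖f t‖₊ : ℝ≥0∞)) m := hf.enorm
  set h : ℝ → ℝ≥0∞ := fun t => (‖f t‖₊ : ℝ≥0∞) ^ 2 * (P t)⁻¹ with hh
  have hhm : AEMeasurable h m := (hfm.pow_const 2).mul P_meas.inv.aemeasurable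
  have hae1 : ∀ᵐ x ∂m, x ∈ Set.Icc (0:ℝ) 1 := ae_restrict_mem measurableSet_Icc
  have hne1 : ∀ᵐ t ∂m, t ≠ 1 := by
    rw [ae_iff]
    have e : {t : ℝ | ¬ t ≠ 1} = {1} := by ext t; simp
    rw [e, show m = volume.restrict (Set.Icc 0 1) from rfl,
      Measure.restrict_apply (measurableSet_singleton 1)]
    exact measure_mono_null Set.inter_subset_left (by simp)
  have step1 : ∀ x ∈ Set.Icc (0:ℝ) 1,
      ((‖∫ t in Set.Ioc 0 x, f t ∂m‖₊ : ℝ≥0∞)) ^ 2 ≤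
        ENNReal.ofReal (2/π) * (Q x * ∫⁻ t in Set.Iic x, h t ∂m) := by
    intro x hx
    have hres := m_restrict_Ioc hx
    have n1 : ((‖∫ t in Set.Ioc 0 x, f t ∂m‖₊ : ℝ≥0∞)) ≤
        ∫⁻ t in Set.Ioc 0 x, (‖f t‖₊ : ℝ≥0∞) ∂m := by
      rw [← ofReal_norm_eq_coe_nnnorm]
      refine le_trans (ENNReal.ofReal_le_ofReal (norm_integral_le_lintegral_norm _)) ?_
      refine le_trans ENNReal.ofReal_toReal_le (le_of_eq ?_)
      exact lintegral_congr fun t => ofReal_norm_eq_coe_nnnorm _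
    have hfx : AEMeasurable (fun t => (‖f t‖₊:ℝ≥0∞)) (m.restrict (Set.Ioc 0 x)) := hfm.restrict
    have key : ∫⁻ t, (‖f t‖₊:ℝ≥0∞) ∂(m.restrict (Set.Ioc 0 x)) =
        ∫⁻ t, (P t)^(1/2:ℝ) * ((‖f t‖₊:ℝ≥0∞) * (P t)^(-(1/2):ℝ)) ∂(m.restrict (Set.Ioc 0 x)) := by
      refine lintegral_congr_ae ?_
      have hne1' : ∀ᵐ t ∂(m.restrict (Set.Ioc 0 x)), t ≠ 1 := ae_restrict_of_ae hne1
      have hmem : ∀ᵐ t ∂(m.restrict (Set.Ioc 0 x)), t ∈ Set.Ioc 0 x := ae_restrict_mem measurableSet_Ioc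
      filter_upwards [hne1', hmem] with t ht1 htm
      have hP0 : P t ≠ 0 := P_ne_zero htm.1.le (lt_of_le_of_ne (htm.2.trans hx.2) ht1)
      rw [mul_left_comm, ← ENNReal.rpow_add _ _ hP0 ENNReal.ofReal_ne_top]
      norm_num
    have CS := lintegral_cs (m.restrict (Set.Ioc 0 x)) (fun t => (P t)^(1/2:ℝ))
      (fun t => (‖f t‖₊:ℝ≥0∞) * (P t)^(-(1/2):ℝ))
      (P_meas.pow measurable_const).aemeasurable
      (hfx.mul (P_meas.pow measurable_const).aemeasurable)
    have e1 : ∀ t : ℝ, ((P t)^(1/2:ℝ))^2 = P t := fun t => by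
      rw [← ENNReal.rpow_natCast _ 2, ← ENNReal.rpow_mul]; norm_num
    have e2 : ∀ t : ℝ, ((‖f t‖₊:ℝ≥0∞) * (P t)^(-(1/2):ℝ))^2 = h t := fun t => by
      rw [mul_pow, ← ENNReal.rpow_natCast ((P t) ^ (-(1/2):ℝ)) 2, ← ENNReal.rpow_mul, hh]
      norm_num [ENNReal.rpow_neg_one]
    simp_rw [e1, e2] at CS
    have hPint : ∫⁻ t, P t ∂(m.restrict (Set.Ioc 0 x)) = ENNReal.ofReal (2/π) * Q x := by
      rw [hres]; exact lint_P_Ioc hx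
    have hhint : ∫⁻ t, h t ∂(m.restrict (Set.Ioc 0 x)) ≤ ∫⁻ t in Set.Iic x, h t ∂m :=
      lintegral_mono' (Measure.restrict_mono (fun t ht => ht.2) le_rfl) le_rfl
    calc ((‖∫ t in Set.Ioc 0 x, f t ∂m‖₊ : ℝ≥0∞)) ^ 2
        ≤ (∫⁻ t, (‖f t‖₊:ℝ≥0∞) ∂(m.restrict (Set.Ioc 0 x))) ^ 2 := by gcongr
      _ = (∫⁻ t, (P t)^(1/2:ℝ) * ((‖f t‖₊:ℝ≥0∞) * (P t)^(-(1/2):ℝ)) ∂(m.restrict (Set.Ioc 0 x))) ^ 2 := by rw [key]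
      _ ≤ (∫⁻ t, P t ∂(m.restrict (Set.Ioc 0 x))) * (∫⁻ t, h t ∂(m.restrict (Set.Ioc 0 x))) := CS
      _ ≤ (ENNReal.ofReal (2/π) * Q x) * (∫⁻ t in Set.Iic x, h t ∂m) := by
          rw [hPint]; exact mul_le_mul_right hhint _
      _ = ENNReal.ofReal (2/π) * (Q x * ∫⁻ t in Set.Iic x, h t ∂m) := by rw [mul_assoc]
  rw [eLpNorm_two, eLpNorm_two]
  set I := ∫⁻ t, (‖f t‖₊:ℝ≥0∞)^2 ∂m with hI
  have hL : ∫⁻ x, (‖∫ t in Set.Ioc 0 x, f t ∂m‖₊:ℝ≥0∞)^2 ∂m ≤ (ENNReal.ofReal (2/π))^2 * I := by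
    set D : ℝ × ℝ → ℝ≥0∞ := fun z => Set.indicator {w : ℝ×ℝ | w.2 ≤ w.1} (fun _ => 1) z with hD
    have hDmeas : Measurable D :=
      measurable_const.indicator (measurableSet_le measurable_snd measurable_fst)
    have hind : ∀ x : ℝ, (∫⁻ t in Set.Iic x, h t ∂m) = ∫⁻ t, h t * D (x, t) ∂m := by
      intro x
      rw [← lintegral_indicator measurableSet_Iic]
      refine lintegral_congr fun t => ?_
      by_cases hle : t ≤ x
      · simp [hD, Set.indicator_of_mem, hle]
      · simp [hD, Set.indicator_of_notMem, hle]
    calc ∫⁻ x, ((‖∫ t in Set.Ioc 0 x, f t ∂m‖₊:ℝ≥0∞))^2 ∂m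
        ≤ ∫⁻ x, ENNReal.ofReal (2/π) * (Q x * ∫⁻ t, h t * D (x, t) ∂m) ∂m := by
          refine lintegral_mono_ae ?_
          filter_upwards [hae1] with x hx
          rw [← hind x]; exact step1 x hx
      _ = ENNReal.ofReal (2/π) * ∫⁻ x, Q x * ∫⁻ t, h t * D (x, t) ∂m ∂m :=
          lintegral_const_mul' _ _ ENNReal.ofReal_ne_top
      _ = ENNReal.ofReal (2/π) * ∫⁻ x, ∫⁻ t, Q x * (h t * D (x, t)) ∂m ∂m := by
          congr 1
          refine lintegral_congr fun x => ?_
          rw [lintegral_const_mul' (Q x) _ ENNReal.ofReal_ne_top]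
      _ = ENNReal.ofReal (2/π) * ∫⁻ t, ∫⁻ x, Q x * (h t * D (x, t)) ∂m ∂m := by
          congr 1
          refine lintegral_lintegral_swap ?_
          refine ((Q_meas.comp measurable_fst).aemeasurable.mul ?_)
          exact (hhm.comp_quasiMeasurePreserving
            MeasureTheory.Measure.quasiMeasurePreserving_snd).mul hDmeas.aemeasurable
      _ = ENNReal.ofReal (2/π) * ∫⁻ t, h t * ∫⁻ x, Q x * D (x, t) ∂m ∂m := by
          congr 1
          refine lintegral_congr fun t => ?_
          have hQD : Measurable fun x : ℝ => Q x * D (x, t) :=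
            Q_meas.mul (hDmeas.comp measurable_prodMk_right)
          rw [← lintegral_const_mul (h t) hQD]
          refine lintegral_congr fun x => ?_
          ring
      _ = ENNReal.ofReal (2/π) * ∫⁻ t, ENNReal.ofReal (2/π) * ((‖f t‖₊:ℝ≥0∞)^2) ∂m := by
          congr 1
          refine lintegral_congr_ae ?_
          filter_upwards [hae1, hne1] with t htI htne
          have inner : ∫⁻ x, Q x * D (x, t) ∂m = ENNReal.ofReal (2/π) * P t := by
            rw [← lint_Q_Ici htI, ← lintegral_indicator measurableSet_Ici]
            refine lintegral_congr fun x => ?_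
            by_cases hle : t ≤ x
            · simp [hD, Set.indicator_of_mem, hle]
            · simp [hD, Set.indicator_of_notMem, hle]
          rw [inner, hh]
          have hP0 : P t ≠ 0 := P_ne_zero htI.1 (lt_of_le_of_ne htI.2 htne)
          rw [mul_comm (ENNReal.ofReal (2/π)) (P t), ← mul_assoc,
            mul_assoc ((‖f t‖₊:ℝ≥0∞)^2), ENNReal.inv_mul_cancel hP0 ENNReal.ofReal_ne_top,
            mul_one, mul_comm]
      _ = (ENNReal.ofReal (2/π))^2 * I := by
          rw [lintegral_const_mul' _ _ ENNReal.ofReal_ne_top, ← mul_assoc, ← pow_two]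
  calc (∫⁻ x, ((‖∫ t in Set.Ioc 0 x, f t ∂m‖₊:ℝ≥0∞))^2 ∂m) ^ (1/2:ℝ)
      ≤ ((ENNReal.ofReal (2/π))^2 * I) ^ (1/2:ℝ) := ENNReal.rpow_le_rpow hL (by norm_num)
    _ = ENNReal.ofReal (2/π) * I ^ (1/2:ℝ) := by
        rw [ENNReal.mul_rpow_of_nonneg _ _ (by norm_num),
          ← ENNReal.rpow_natCast (ENNReal.ofReal (2/π)) 2, ← ENNReal.rpow_mul]
        norm_num

theorem volterra_norm (V : Lp ℂ 2 m →L[ℂ] Lp ℂ 2 m)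
    (hV : ∀ f : Lp ℂ 2 m, V f =ᵐ[m] fun x => ∫ t in Set.Ioc 0 x, f t ∂m) :
    ‖V‖ = 2 / π := by
  have hπ := Real.pi_pos
  set φ₀ : ℝ → ℂ := fun t => (Real.cos (π * t / 2) : ℂ) with hφ₀
  have hcont : Continuous φ₀ := Complex.continuous_ofReal.comp (by fun_prop)
  have hmem : MemLp φ₀ 2 m := by
    refine MemLp.of_bound hcont.aestronglyMeasurable 1 (ae_of_all _ fun t => ?_)
    rw [hφ₀]
    simp only [Complex.norm_real, Real.norm_eq_abs]
    exact Real.abs_cos_le_one _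
  set F := hmem.toLp φ₀ with hF
  have hVF : (V F : ℝ → ℂ) =ᵐ[m] fun x => ((2/π * Real.sin (π * x / 2) : ℝ) : ℂ) := by
    have h0 : ∀ᵐ x ∂m, x ∈ Set.Icc (0:ℝ) 1 := ae_restrict_mem measurableSet_Icc
    filter_upwards [hV F, h0] with x h1 hx
    rw [h1]
    have e : ∫ t in Set.Ioc 0 x, (F : ℝ → ℂ) t ∂m = ∫ t in Set.Ioc 0 x, φ₀ t ∂m :=
      integral_congr_ae (ae_restrict_of_ae (MemLp.coeFn_toLp hmem))
    rw [e, m_restrict_Ioc hx]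
    simp only [hφ₀]
    have e2 : (∫ t in Set.Ioc 0 x, ((Real.cos (π*t/2) : ℝ) : ℂ) ∂volume)
        = ((∫ t in Set.Ioc 0 x, Real.cos (π*t/2) ∂volume : ℝ) : ℂ) := integral_ofReal
    rw [e2, int_cos_Ioc hx]
  have hnF : ‖F‖ = Real.sqrt (1/2) := by
    rw [hF, Lp.norm_toLp _ hmem, hφ₀, _root_.eLpNorm_ofReal _ (by fun_prop), cos_sq_int,
      ← ENNReal.toReal_rpow, ENNReal.toReal_ofReal (by norm_num), ← Real.sqrt_eq_rpow]
  have hnVF : ‖V F‖ = 2/π * Real.sqrt (1/2) := by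
    rw [Lp.norm_def, eLpNorm_congr_ae hVF, _root_.eLpNorm_ofReal _ (by fun_prop)]
    have e : ∫ t in (0:ℝ)..1, (2/π * Real.sin (π * t / 2))^2 = (2/π)^2 * (1/2) := by
      simp_rw [mul_pow]
      rw [intervalIntegral.integral_const_mul, sin_sq_int]
    rw [e, ← ENNReal.toReal_rpow, ENNReal.toReal_ofReal (by positivity),
      ← Real.sqrt_eq_rpow, Real.sqrt_mul (sq_nonneg _), Real.sqrt_sq (by positivity)]
  have hlow : 2/π ≤ ‖V‖ := by
    have hle := V.le_opNorm F
    rw [hnF, hnVF] at hle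
    have hs : 0 < Real.sqrt (1/2) := Real.sqrt_pos.mpr (by norm_num)
    exact le_of_mul_le_mul_right hle hs
  refine le_antisymm ?_ hlow
  refine V.opNorm_le_bound (by positivity) fun f => ?_
  rw [Lp.norm_def, eLpNorm_congr_ae (hV f), Lp.norm_def]
  have h1 := upper f (Lp.aestronglyMeasurable f)
  refine le_trans (ENNReal.toReal_mono
    (ENNReal.mul_ne_top ENNReal.ofReal_ne_top (Lp.eLpNorm_ne_top f)) h1) ?_
  rw [ENNReal.toReal_mul, ENNReal.toReal_ofReal (by positivity)]
end

section
/- For every complex number ν ≠ 0, the operator norm of I + νV is strictly greater than 1, where V is the Volterra operator on L²[0,1]. -/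
open MeasureTheory Complex
instance inst_s6 : IsFiniteMeasure m := by
  constructor; simp [m, Real.volume_Icc]

noncomputable def g (c : ℝ) : ℝ → ℂ := fun x => Complex.exp (c * x * Complex.I)

lemma memLp_g (c : ℝ) : MemLp (g c) 2 m :=
  MemLp.of_bound (Continuous.aestronglyMeasurable (by unfold g; fun_prop)) 1
    (by filter_upwards with x; simp [g, Complex.norm_exp])

noncomputable def fc (c : ℝ) : Lp ℂ 2 m := (memLp_g c).toLp (g c)

lemma fc_ae (c : ℝ) : (fc c : ℝ → ℂ) =ᵐ[m] g c := MemLp.coeFn_toLp (memLp_g c)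

lemma conj_g (c : ℝ) (x : ℝ) : (starRingEnd ℂ) (g c x) = Complex.exp (-(c * x * Complex.I)) := by
  rw [g, ← Complex.exp_conj]
  congr 1
  simp [Complex.ext_iff]

lemma inner_fc_self (c : ℝ) : (inner ℂ (fc c) (fc c) : ℂ) = 1 := by
  rw [MeasureTheory.L2.inner_def]
  have : ∫ x, (inner ℂ ((fc c : ℝ → ℂ) x) ((fc c : ℝ → ℂ) x) : ℂ) ∂m = ∫ _x, (1:ℂ) ∂m := by
    apply integral_congr_ae
    filter_upwards [fc_ae c] with x hx
    rw [hx, RCLike.inner_apply, conj_g, g, ← Complex.exp_add]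
    simp
  rw [this, integral_const]
  simp [m, Real.volume_Icc]

lemma norm_fc (c : ℝ) : ‖fc c‖ = 1 := by
  have h := inner_fc_self c
  rw [inner_self_eq_norm_sq_to_K] at h
  have h2 : ‖fc c‖ * ‖fc c‖ = 1 := by
    simpa [pow_two, Complex.mul_re] using congrArg Complex.re h
  nlinarith [norm_nonneg (fc c)]

lemma integral_g' (c : ℝ) (hc : c ≠ 0) (x : ℝ) (hx : x ∈ Set.Icc (0:ℝ) 1) :
    ∫ t in Set.Ioc 0 x, g c t ∂m = (Complex.exp (c * x * Complex.I) - 1) / (c * Complex.I) := by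
  rw [m, Measure.restrict_restrict measurableSet_Ioc]
  have hsub : Set.Ioc (0:ℝ) x ⊆ Set.Icc 0 1 := fun t ht => ⟨ht.1.le, ht.2.trans hx.2⟩
  rw [Set.inter_eq_left.2 hsub]
  rw [← intervalIntegral.integral_of_le hx.1]
  have := integral_exp_mul_complex (a := 0) (b := x) (c := c * Complex.I)
    (by simp [Complex.ext_iff, hc])
  simp only [Complex.ofReal_zero, mul_zero, Complex.exp_zero] at this
  rw [show (fun t : ℝ => g c t) = fun t : ℝ => Complex.exp ((c * Complex.I) * t) by
    funext t; simp only [g]; ring_nf]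
  rw [this]
  ring_nf

lemma cI_ne (c : ℝ) (hc : c ≠ 0) : (c : ℂ) * Complex.I ≠ 0 := by
  simp [Complex.ext_iff, hc]

lemma inner_fc_V (V : Lp ℂ 2 m →L[ℂ] Lp ℂ 2 m)
    (hV : ∀ f : Lp ℂ 2 m, V f =ᵐ[m] fun x => ∫ t in Set.Ioc 0 x, f t ∂m)
    (c : ℝ) (hc : c ≠ 0) (hce : Complex.exp (c * Complex.I) = 1) :
    (inner ℂ (fc c) (V (fc c)) : ℂ) = 1 / (c * Complex.I) := by
  rw [MeasureTheory.L2.inner_def]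
  have hae : ∀ᵐ x ∂m, x ∈ Set.Icc (0:ℝ) 1 := by
    rw [m]; exact self_mem_ae_restrict measurableSet_Icc
  have key : ∫ x, (inner ℂ ((fc c : ℝ → ℂ) x) ((V (fc c) : ℝ → ℂ) x) : ℂ) ∂m
      = ∫ x, (1 - Complex.exp (-((c:ℂ) * x * Complex.I))) / (c * Complex.I) ∂m := by
    apply integral_congr_ae
    filter_upwards [fc_ae c, hV (fc c), hae] with x hx hVx hxI
    rw [hx, hVx, RCLike.inner_apply, conj_g]
    have : ∫ t in Set.Ioc 0 x, (fc c : ℝ → ℂ) t ∂m = ∫ t in Set.Ioc 0 x, g c t ∂m :=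
      integral_congr_ae (ae_restrict_of_ae (fc_ae c))
    rw [this, integral_g' c hc x hxI, mul_comm ((Complex.exp (c * x * Complex.I) - 1) / (c * Complex.I)), ← mul_div_assoc]
    congr 1
    rw [mul_sub, ← Complex.exp_add, mul_one, neg_add_cancel, Complex.exp_zero]
  rw [key, integral_div]
  congr 1
  have h1 : ∫ x, (1 - Complex.exp (-((c:ℂ) * x * Complex.I))) ∂m
      = ∫ x in (0:ℝ)..1, (1 - Complex.exp (-((c:ℂ) * x * Complex.I))) := by
    rw [m, intervalIntegral.integral_of_le zero_le_one, ← MeasureTheory.integral_Icc_eq_integral_Ioc]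
  rw [h1]
  have hint : IntervalIntegrable (fun x : ℝ => Complex.exp (-((c:ℂ) * x * Complex.I))) volume 0 1 :=
    (Continuous.intervalIntegrable (by fun_prop) 0 1)
  rw [intervalIntegral.integral_sub intervalIntegrable_const hint]
  have h2 : ∫ x in (0:ℝ)..1, Complex.exp (-((c:ℂ) * x * Complex.I)) = 0 := by
    have key2 := integral_exp_mul_complex (a := 0) (b := 1) (c := -((c:ℂ) * Complex.I))
      (by simp [Complex.ext_iff, hc])
    rw [show (fun x : ℝ => Complex.exp (-((c:ℂ) * x * Complex.I)))
        = fun x : ℝ => Complex.exp ((-((c:ℂ) * Complex.I)) * x) by funext t; ring_nf, key2]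
    simp only [Complex.ofReal_one, Complex.ofReal_zero, mul_one, mul_zero, Complex.exp_zero]
    rw [Complex.exp_neg, hce, inv_one]
    simp
  rw [h2, sub_zero]
  have : ∫ x in (0:ℝ)..1, (1:ℂ) = 1 := by simp
  rw [this]

lemma div_cI_re (ν : ℂ) (c : ℝ) (hc : c ≠ 0) : (ν / (c * Complex.I)).re = ν.im / c := by
  simp [Complex.div_re, Complex.normSq_apply]
  field_simp

lemma div_cI_im (ν : ℂ) (c : ℝ) (hc : c ≠ 0) : (ν / (c * Complex.I)).im = -ν.re / c := by
  simp [Complex.div_im, Complex.normSq_apply]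
  field_simp

lemma key_bound (V : Lp ℂ 2 m →L[ℂ] Lp ℂ 2 m)
    (hV : ∀ f : Lp ℂ 2 m, V f =ᵐ[m] fun x => ∫ t in Set.Ioc 0 x, f t ∂m)
    (ν : ℂ) (c : ℝ) (hc : c ≠ 0) (hce : Complex.exp (c * Complex.I) = 1) :
    ‖1 + ν / (c * Complex.I)‖ ≤ ‖(1 : Lp ℂ 2 m →L[ℂ] Lp ℂ 2 m) + ν • V‖ := by
  set A := (1 : Lp ℂ 2 m →L[ℂ] Lp ℂ 2 m) + ν • V with hAdef
  have hA : A (fc c) = fc c + ν • V (fc c) := by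
    simp [hAdef]
  have hinner : (inner ℂ (fc c) (A (fc c)) : ℂ) = 1 + ν / (c * Complex.I) := by
    rw [hA, inner_add_right, inner_smul_right, inner_fc_self, inner_fc_V V hV c hc hce,
      mul_one_div]
  calc ‖1 + ν / (c * Complex.I)‖ = ‖(inner ℂ (fc c) (A (fc c)) : ℂ)‖ := by
        rw [hinner]
    _ ≤ ‖fc c‖ * ‖A (fc c)‖ := norm_inner_le_norm _ _
    _ = ‖A (fc c)‖ := by rw [norm_fc, one_mul]
    _ ≤ ‖A‖ * ‖fc c‖ := A.le_opNorm _
    _ = ‖A‖ := by rw [norm_fc, mul_one]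

lemma normSq_bound (a b c : ℝ) (hc : c ≠ 0) (hb : 0 ≤ b / c) (h : ¬(a = 0 ∧ b = 0)) :
    1 < (1 + b / c) ^ 2 + (-a / c) ^ 2 := by
  rcases eq_or_ne b 0 with h0 | h0
  · have ha : a ≠ 0 := by tauto
    have h1 : (0:ℝ) < (-a / c) ^ 2 :=
      pow_two_pos_of_ne_zero (div_ne_zero (neg_ne_zero.2 ha) hc)
    rw [h0]
    simp
    nlinarith
  · have h1 : 0 < b / c := lt_of_le_of_ne hb (Ne.symm (div_ne_zero h0 hc))
    nlinarith [sq_nonneg (-a / c)]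

lemma abs_bound (ν : ℂ) (c : ℝ) (hc : c ≠ 0) (hb : 0 ≤ ν.im / c) (hν : ν ≠ 0) :
    1 < ‖1 + ν / (c * Complex.I)‖ := by
  have h1 : 1 < Complex.normSq (1 + ν / (c * Complex.I)) := by
    rw [Complex.normSq_apply, Complex.add_re, Complex.add_im, Complex.one_re, Complex.one_im,
      div_cI_re ν c hc, div_cI_im ν c hc, zero_add]
    have := normSq_bound ν.re ν.im c hc hb (by
      intro ⟨h1, h2⟩; exact hν (Complex.ext h1 h2))
    nlinarith [this]
  have h2 := Complex.sq_norm (1 + ν / (c * Complex.I))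
  nlinarith [norm_nonneg (1 + ν / (c * Complex.I))]

theorem norm_one_add_smul_volterra_gt_one (V : Lp ℂ 2 m →L[ℂ] Lp ℂ 2 m)
    (hV : ∀ f : Lp ℂ 2 m, V f =ᵐ[m] fun x => ∫ t in Set.Ioc 0 x, f t ∂m) :
    ∀ ν : ℂ, ν ≠ 0 → 1 < ‖(1 : Lp ℂ 2 m →L[ℂ] Lp ℂ 2 m) + ν • V‖ := by
  intro ν hν
  by_cases hb : 0 ≤ ν.im
  · have hc : (2 * Real.pi) ≠ 0 := by positivity
    have hce : Complex.exp ((2 * Real.pi : ℝ) * Complex.I) = 1 := by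
      push_cast; exact Complex.exp_two_pi_mul_I
    exact lt_of_lt_of_le (abs_bound ν _ hc (div_nonneg hb (by positivity)) hν)
      (key_bound V hV ν _ hc hce)
  · push_neg at hb
    have hc : (-(2 * Real.pi)) ≠ 0 := by
      have := Real.pi_pos; intro h; nlinarith
    have hce : Complex.exp ((-(2 * Real.pi) : ℝ) * Complex.I) = 1 := by
      push_cast
      rw [show (-(2 * (Real.pi:ℂ))) * Complex.I = -((2 * Real.pi) * Complex.I) by ring,
        Complex.exp_neg, Complex.exp_two_pi_mul_I, inv_one]
    have hb' : 0 ≤ ν.im / (-(2 * Real.pi)) := by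
      apply div_nonneg_of_nonpos hb.le
      have := Real.pi_pos; nlinarith
    exact lt_of_lt_of_le (abs_bound ν _ hc hb' hν) (key_bound V hV ν _ hc hce)
end

section
/- Suppose ξ, η are real numbers satisfying ξ ≤ 0, 4η²/π² − 2η + ξ² ≤ 0, and (4ξ/π² − 1)η² + (ξ² − 2ξ)η + ξ³ ≥ 0. Then for every g ∈ C²[0,1] with g(0) = g'(0) = 0, one has ∫₀¹ |g'' + ξg' + ηg|² ≤ ∫₀¹ |g''|². -/
open Real intervalIntegral MeasureTheory Set

lemma inner_c (z w : ℂ) : (inner ℝ z w : ℝ) = z.re*w.re + z.im*w.im := by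
  simp [RCLike.inner_apply, Complex.mul_re]; ring

lemma norm_sq_c (z : ℂ) : ‖z‖^2 = z.re^2 + z.im^2 := by
  rw [Complex.sq_norm, Complex.normSq_apply]; ring

lemma expand_sq (ξ η : ℝ) (z w v : ℂ) :
    ‖z + (ξ:ℂ)*w + (η:ℂ)*v‖^2 = ‖z‖^2 + ξ^2*‖w‖^2 + η^2*‖v‖^2
      + 2*ξ*(inner ℝ w z : ℝ) + 2*η*(inner ℝ v z : ℝ) + 2*(ξ*η)*(inner ℝ v w : ℝ) := by
  simp only [inner_c, Complex.sq_norm, Complex.normSq_apply,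
    Complex.add_re, Complex.add_im, Complex.mul_re, Complex.mul_im, Complex.ofReal_re,
    Complex.ofReal_im]
  ring

lemma ftcE {E : Type*} [NormedAddCommGroup E] [NormedSpace ℝ E] [CompleteSpace E]
    {f f' : ℝ → E} {a b : ℝ} (hab : a ≤ b)
    (hd : ∀ x ∈ Set.Icc a b, HasDerivWithinAt f (f' x) (Set.Icc a b) x)
    (hc : ContinuousOn f' (Set.Icc a b)) :
    ∫ y in a..b, f' y = f b - f a := by
  refine intervalIntegral.integral_eq_sub_of_hasDeriv_right_of_le hab
    (fun x hx => (hd x hx).continuousWithinAt)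
    (fun x hx => ((hd x (Set.mem_Icc.2 ⟨hx.1.le, hx.2.le⟩)).hasDerivAt
      (Icc_mem_nhds hx.1 hx.2)).hasDerivWithinAt)
    (hc.intervalIntegrable_of_Icc hab)

set_option maxHeartbeats 1000000 in
lemma wirtinger {g g' : ℝ → ℂ}
    (hg' : ∀ x ∈ Set.Icc (0:ℝ) 1, HasDerivWithinAt g (g' x) (Set.Icc 0 1) x)
    (hc : ContinuousOn g' (Set.Icc 0 1)) (h0 : g 0 = 0) :
    π^2/4 * ∫ x in (0:ℝ)..1, ‖g x‖^2 ≤ ∫ x in (0:ℝ)..1, ‖g' x‖^2 := by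
  have cg : ContinuousOn g (Set.Icc 0 1) := fun x hx => (hg' x hx).continuousWithinAt
  -- bound on g'
  obtain ⟨M, hM⟩ := isCompact_Icc.exists_bound_of_continuousOn hc
  have hM0 : 0 ≤ M := le_trans (norm_nonneg _) (hM 0 ⟨le_refl _, zero_le_one⟩)
  -- bound ‖g ε‖ ≤ M ε
  have gbound : ∀ ε ∈ Set.Icc (0:ℝ) 1, ‖g ε‖ ≤ M * ε := by
    intro ε hε
    have sub : Set.Icc (0:ℝ) ε ⊆ Set.Icc 0 1 := Set.Icc_subset_Icc le_rfl hε.2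
    have hftc : ∫ y in (0:ℝ)..ε, g' y = g ε - g 0 :=
      ftcE hε.1 (fun x hx => ((hg' x (sub hx)).mono sub)) (hc.mono sub)
    rw [h0, sub_zero] at hftc
    rw [← hftc]
    have := intervalIntegral.norm_integral_le_of_norm_le_const (C := M) (a := (0:ℝ)) (b := ε)
      (f := g') (fun x hx => by
        rw [Set.uIoc_of_le hε.1] at hx
        exact hM x ⟨hx.1.le, hx.2.trans hε.2⟩)
    simpa [abs_of_nonneg hε.1] using this
  -- the function h
  set h : ℝ → ℝ := fun x => ‖g' x‖^2 - π^2/4 * ‖g x‖^2 with hh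
  have hcGn : ContinuousOn (fun x => ‖g x‖^2) (Set.Icc (0:ℝ) 1) := (cg.norm).pow 2
  have hcG'n : ContinuousOn (fun x => ‖g' x‖^2) (Set.Icc (0:ℝ) 1) := (hc.norm).pow 2
  have hch : ContinuousOn h (Set.Icc (0:ℝ) 1) := hcG'n.sub (hcGn.const_smul (π^2/4 : ℝ))
  obtain ⟨C, hC⟩ := isCompact_Icc.exists_bound_of_continuousOn hch
  have hC0 : 0 ≤ C := le_trans (norm_nonneg _) (hC 0 ⟨le_refl _, zero_le_one⟩)
  set K : ℝ := C + π/2 * M^2 with hK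
  have hK0 : 0 ≤ K := by positivity
  -- main estimate for each ε
  have key : ∀ ε : ℝ, ε ∈ Set.Ioc (0:ℝ) 1 → -(K * ε) ≤ ∫ x in (0:ℝ)..1, h x := by
    intro ε hε
    set r : ℝ → ℝ := fun x => π/2 * (Real.cos (π*x/2) / Real.sin (π*x/2)) with hr
    set W : ℝ → ℝ := fun x => r x * ‖g x‖^2 with hWdef
    set G : ℝ → ℝ := fun x => (-(π^2/4) - (r x)^2) * ‖g x‖^2 + r x * (2 * (inner ℝ (g x) (g' x) : ℝ)) with hGdef
    have sub1 : Set.Icc ε 1 ⊆ Set.Icc (0:ℝ) 1 := Set.Icc_subset_Icc hε.1.le le_rfl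
    have sinpos : ∀ x ∈ Set.Icc ε 1, 0 < Real.sin (π*x/2) := by
      intro x hx
      apply Real.sin_pos_of_pos_of_lt_pi
      · have := hε.1.trans_le hx.1
        positivity
      · nlinarith [pi_pos, hx.2]
    -- derivative of r
    have hrd : ∀ x ∈ Set.Icc ε 1, HasDerivAt r (-(π^2/4) - (r x)^2) x := by
      intro x hx
      have hlin : HasDerivAt (fun y : ℝ => π*y/2) (π/2) x := by
        simpa using ((hasDerivAt_id x).const_mul π).div_const 2
      have hcos : HasDerivAt (fun y : ℝ => Real.cos (π*y/2)) (-Real.sin (π*x/2) * (π/2)) x :=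
        by have := (Real.hasDerivAt_cos (π*x/2)).comp x hlin; exact this
      have hsin : HasDerivAt (fun y : ℝ => Real.sin (π*y/2)) (Real.cos (π*x/2) * (π/2)) x :=
        by have := (Real.hasDerivAt_sin (π*x/2)).comp x hlin; exact this
      have hne := (sinpos x hx).ne'
      have hdiv := (hcos.div hsin hne).const_mul (π/2)
      refine HasDerivAt.congr_deriv hdiv ?_
      symm
      simp only [hr]
      field_simp [hr]
      ring_nf
    -- derivative of W
    have hWd : ∀ x ∈ Set.Icc ε 1, HasDerivWithinAt W (G x) (Set.Icc ε 1) x := by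
      intro x hx
      have hn : HasDerivWithinAt (fun t => ‖g t‖^2) (2 * (inner ℝ (g x) (g' x) : ℝ)) (Set.Icc ε 1) x :=
        ((hg' x (sub1 hx)).mono sub1).norm_sq
      exact ((hrd x hx).hasDerivWithinAt).mul hn
    -- continuity of r and G on [ε,1]
    have hrc : ContinuousOn r (Set.Icc ε 1) := by
      apply ContinuousOn.mul continuousOn_const
      exact ContinuousOn.div
        (Real.continuous_cos.comp ((continuous_const.mul continuous_id).div_const 2)).continuousOn
        (Real.continuous_sin.comp ((continuous_const.mul continuous_id).div_const 2)).continuousOn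
        (fun x hx => (sinpos x hx).ne')
    have hinnc : ContinuousOn (fun x => (inner ℝ (g x) (g' x) : ℝ)) (Set.Icc (0:ℝ) 1) :=
      ContinuousOn.inner cg hc
    have hGc : ContinuousOn G (Set.Icc ε 1) := by
      apply ContinuousOn.add
      · exact (ContinuousOn.sub continuousOn_const ((hrc.pow 2))).mul (hcGn.mono sub1)
      · exact hrc.mul ((hinnc.mono sub1).const_smul (2:ℝ))
    -- FTC
    have hWc : ContinuousOn W (Set.Icc ε 1) := hrc.mul (hcGn.mono sub1)
    have hftcW : ∫ x in ε..1, G x = W 1 - W ε := by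
      refine intervalIntegral.integral_eq_sub_of_hasDeriv_right_of_le hε.2 hWc
        (fun x hx => ((hWd x ⟨hx.1.le, hx.2.le⟩).hasDerivAt
          (Icc_mem_nhds hx.1 hx.2)).hasDerivWithinAt)
        (hGc.intervalIntegrable_of_Icc hε.2)
    have W1 : W 1 = 0 := by
      have : Real.cos (π*1/2) = 0 := by rw [mul_one]; exact Real.cos_pi_div_two
      simp [hWdef, hr, this]
    -- pointwise identity
    have hpt : ∀ x ∈ Set.Icc ε 1, h x = ‖g' x - (r x : ℂ) * g x‖^2 + G x := by
      intro x hx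
      simp only [hh, hGdef, norm_sq_c, inner_c, Complex.sub_re, Complex.sub_im,
        Complex.mul_re, Complex.mul_im, Complex.ofReal_re, Complex.ofReal_im]
      ring
    -- split the integral over [ε,1]
    have hint1 : IntervalIntegrable (fun x => ‖g' x - (r x : ℂ) * g x‖^2) volume ε 1 := by
      apply ContinuousOn.intervalIntegrable_of_Icc hε.2
      apply ContinuousOn.pow
      apply ContinuousOn.norm
      exact ((hc.mono sub1).sub ((Complex.continuous_ofReal.comp_continuousOn hrc).mul (cg.mono sub1)))
    have hint2 : IntervalIntegrable G volume ε 1 := hGc.intervalIntegrable_of_Icc hε.2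
    have heps : ∫ x in ε..1, h x = (∫ x in ε..1, ‖g' x - (r x : ℂ) * g x‖^2) + ∫ x in ε..1, G x := by
      rw [← intervalIntegral.integral_add hint1 hint2]
      apply intervalIntegral.integral_congr
      intro x hx
      rw [Set.uIcc_of_le hε.2] at hx
      exact hpt x hx
    have hnn : 0 ≤ ∫ x in ε..1, ‖g' x - (r x : ℂ) * g x‖^2 :=
      intervalIntegral.integral_nonneg hε.2 (fun u _ => by positivity)
    -- ∫_ε^1 h ≥ - W ε
    have hge : -(W ε) ≤ ∫ x in ε..1, h x := by
      rw [heps, hftcW, W1]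
      linarith
    -- bound W ε
    have hWb : W ε ≤ π/2 * M^2 * ε := by
      have hεne : ε ≠ 0 := hε.1.ne'
      have hs : ε ≤ Real.sin (π*ε/2) := by
        have := Real.mul_le_sin (x := π*ε/2) (by nlinarith [pi_pos, hε.1]) (by nlinarith [pi_pos, hε.2])
        calc ε = 2/π * (π*ε/2) := by field_simp
        _ ≤ Real.sin (π*ε/2) := this
      have hcos1 : Real.cos (π*ε/2) ≤ 1 := Real.cos_le_one _
      have hcos0 : 0 ≤ Real.cos (π*ε/2) := by
        apply Real.cos_nonneg_of_mem_Icc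
        constructor
        · nlinarith [pi_pos, hε.1.le]
        · nlinarith [pi_pos, hε.2]
      have hsp : 0 < Real.sin (π*ε/2) := sinpos ε ⟨le_rfl, hε.2⟩
      have hgb := gbound ε ⟨hε.1.le, hε.2⟩
      have hgnn : (0:ℝ) ≤ ‖g ε‖ := norm_nonneg _
      have hgsq : ‖g ε‖^2 ≤ (M*ε)^2 := by nlinarith
      have hrb : r ε ≤ π/2 * (1/ε) := by
        have : Real.cos (π*ε/2) / Real.sin (π*ε/2) ≤ 1/ε := by
          rw [div_le_div_iff₀ hsp hε.1]
          nlinarith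
        have hp2 : (0:ℝ) < π/2 := by positivity
        calc r ε = π/2 * (Real.cos (π*ε/2) / Real.sin (π*ε/2)) := rfl
        _ ≤ π/2 * (1/ε) := by nlinarith
      have hr0 : 0 ≤ r ε := by
        apply mul_nonneg (by positivity)
        exact div_nonneg hcos0 hsp.le
      calc W ε = r ε * ‖g ε‖^2 := rfl
      _ ≤ (π/2 * (1/ε)) * (M*ε)^2 := by
          apply mul_le_mul hrb hgsq (by positivity)
          have := hε.1
          positivity
      _ = π/2 * M^2 * ε := by field_simp
    -- bound ∫_0^ε h
    have hsplit : (∫ x in (0:ℝ)..ε, h x) + ∫ x in ε..1, h x = ∫ x in (0:ℝ)..1, h x := by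
      apply intervalIntegral.integral_add_adjacent_intervals
      · exact (hch.mono (Set.Icc_subset_Icc le_rfl hε.2)).intervalIntegrable_of_Icc hε.1.le
      · exact (hch.mono sub1).intervalIntegrable_of_Icc hε.2
    have hb0 : |∫ x in (0:ℝ)..ε, h x| ≤ C * ε := by
      have := intervalIntegral.norm_integral_le_of_norm_le_const (C := C) (a := (0:ℝ)) (b := ε)
        (f := h) (fun x hx => by
          rw [Set.uIoc_of_le hε.1.le] at hx
          exact hC x ⟨hx.1.le, hx.2.trans hε.2⟩)
      simpa [abs_of_nonneg hε.1.le] using this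
    rw [← hsplit]
    calc -(K*ε) = -(C*ε) + -(π/2*M^2*ε) := by rw [hK]; ring
    _ ≤ (∫ x in (0:ℝ)..ε, h x) + ∫ x in ε..1, h x :=
        add_le_add (neg_le_of_abs_le hb0) (le_trans (neg_le_neg hWb) hge)
  -- conclude 0 ≤ ∫ h
  have hInn : 0 ≤ ∫ x in (0:ℝ)..1, h x := by
    by_contra hcon
    push_neg at hcon
    set I := ∫ x in (0:ℝ)..1, h x
    set ε : ℝ := min 1 (-I / (2*(K+1))) with hεdef
    have h2K : (0:ℝ) < 2*(K+1) := by linarith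
    have hεpos : 0 < ε := lt_min one_pos (div_pos (by linarith) h2K)
    have hε1 : ε ≤ 1 := min_le_left _ _
    have hεle : ε ≤ -I / (2*(K+1)) := min_le_right _ _
    have h1 := key ε ⟨hεpos, hε1⟩
    have h3 : K*ε ≤ K*(-I/(2*(K+1))) := mul_le_mul_of_nonneg_left hεle hK0
    have hq : K*I/(2*(K+1)) ≤ I := by
      calc K*I/(2*(K+1)) = -(K*(-I/(2*(K+1)))) := by ring
      _ ≤ -(K*ε) := neg_le_neg h3
      _ ≤ I := h1
    rw [div_le_iff₀ h2K] at hq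
    have hKI : K*I ≤ 0 := mul_nonpos_of_nonneg_of_nonpos hK0 hcon.le
    have hexp : I*(2*(K+1)) = 2*(K*I) + 2*I := by ring
    linarith [hq, hexp, hKI, hcon]
  -- finish
  have hcGm : ContinuousOn (fun x => π^2/4 * ‖g x‖^2) (Set.Icc (0:ℝ) 1) :=
    continuousOn_const.mul hcGn
  have hsub : (∫ x in (0:ℝ)..1, h x) = (∫ x in (0:ℝ)..1, ‖g' x‖^2) - π^2/4 * ∫ x in (0:ℝ)..1, ‖g x‖^2 := by
    simp only [hh]
    rw [intervalIntegral.integral_sub (hcG'n.intervalIntegrable_of_Icc zero_le_one)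
      (hcGm.intervalIntegrable_of_Icc zero_le_one)]
    congr 1
    exact intervalIntegral.integral_const_mul _ _
  linarith [hInn, hsub.symm.le, hsub.le]

lemma final_algebra (ξ η p A B s t c : ℝ) (hp : 0 < p)
    (h1 : ξ ≤ 0) (hη : 0 ≤ η)
    (h2' : 4*η^2 - 2*η*p + ξ^2*p ≤ 0)
    (h3' : 0 ≤ (4*ξ - p)*η^2 + (ξ^2 - 2*ξ)*η*p + ξ^3*p)
    (F4' : p * B ≤ 4 * A) (F5 : s^2 ≤ A) (F6 : c ≤ s*t) :
    ξ^2*A + η^2*B + ξ*t^2 + 2*η*c - 2*η*A + ξ*η*s^2 ≤ 0 := by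
  have w1 : η^2*B*p ≤ 4*η^2*A := by nlinarith [F4', sq_nonneg η]
  have w2 : (ξ^2 - 2*η)*p + 4*η^2 ≤ 0 := by nlinarith [h2']
  have w3 : ((ξ^2 - 2*η)*p + 4*η^2)*A ≤ ((ξ^2 - 2*η)*p + 4*η^2)*s^2 :=
    mul_le_mul_of_nonpos_left F5 w2
  set R := ((ξ^2 - 2*η)*p + 4*η^2)*s^2 + ξ*t^2*p + 2*η*c*p + ξ*η*s^2*p with hR
  have hpS : p*(ξ^2*A + η^2*B + ξ*t^2 + 2*η*c - 2*η*A + ξ*η*s^2) ≤ R := by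
    rw [hR]; nlinarith [w1, w3]
  have hR0 : R ≤ 0 := by
    rcases eq_or_lt_of_le h1 with hξ0 | hξneg
    · have hξ0' : ξ = 0 := hξ0
      have hη2 : η^2 ≤ 0 := by
        have h3c := h3'
        rw [hξ0'] at h3c
        nlinarith [h3c, hp, sq_nonneg η]
      have hη0 : η = 0 := by nlinarith [sq_nonneg η]
      rw [hR, hξ0', hη0]
      norm_num
    · by_contra hRpos
      push_neg at hRpos
      have hξη : ξ*η ≤ 0 := mul_nonpos_of_nonpos_of_nonneg h1 hη
      have hcp : 2*ξ*η*p*(s*t) ≤ 2*ξ*η*p*c := by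
        apply mul_le_mul_of_nonpos_left F6
        nlinarith [hp]
      have hs2 : 0 ≤ s^2 * ((4*ξ - p)*η^2 + (ξ^2 - 2*ξ)*η*p + ξ^3*p) :=
        mul_nonneg (sq_nonneg s) h3'
      have hsq : 0 ≤ p * (ξ*t + η*s)^2 := mul_nonneg hp.le (sq_nonneg _)
      have hξR : 0 ≤ ξ * R := by
        have hid : ξ * R - p*(ξ*t + η*s)^2
            = s^2 * ((4*ξ - p)*η^2 + (ξ^2 - 2*ξ)*η*p + ξ^3*p)
              + (2*ξ*η*p*c - 2*ξ*η*p*(s*t)) := by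
          rw [hR]; ring
        linarith [hid.le, hid.ge, hs2, hcp, hsq]
      have hneg : ξ * R < 0 := mul_neg_of_neg_of_pos hξneg hRpos
      linarith
  nlinarith [le_trans hpS hR0, hp]

set_option maxHeartbeats 1000000 in
theorem key_quadratic_estimate (ξ η : ℝ)
    (h1 : ξ ≤ 0)
    (h2 : 4 * η ^ 2 / π ^ 2 - 2 * η + ξ ^ 2 ≤ 0)
    (h3 : 0 ≤ (4 * ξ / π ^ 2 - 1) * η ^ 2 + (ξ ^ 2 - 2 * ξ) * η + ξ ^ 3)
    (g g' g'' : ℝ → ℂ)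
    (hg' : ∀ x ∈ Set.Icc (0 : ℝ) 1, HasDerivWithinAt g (g' x) (Set.Icc 0 1) x)
    (hg'' : ∀ x ∈ Set.Icc (0 : ℝ) 1, HasDerivWithinAt g' (g'' x) (Set.Icc 0 1) x)
    (hcont : ContinuousOn g'' (Set.Icc 0 1))
    (h0 : g 0 = 0) (h0' : g' 0 = 0) :
    ∫ x in (0 : ℝ)..1, ‖g'' x + (ξ : ℂ) * g' x + (η : ℂ) * g x‖ ^ 2 ≤
      ∫ x in (0 : ℝ)..1, ‖g'' x‖ ^ 2 := by
  have s01 : (0:ℝ) ≤ 1 := zero_le_one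
  have cg' : ContinuousOn g' (Set.Icc 0 1) := fun x hx => (hg'' x hx).continuousWithinAt
  have cg : ContinuousOn g (Set.Icc 0 1) := fun x hx => (hg' x hx).continuousWithinAt
  -- continuity of pieces
  have c1 : ContinuousOn (fun x => ‖g'' x‖^2) (Set.Icc (0:ℝ) 1) := hcont.norm.pow 2
  have c2 : ContinuousOn (fun x => ‖g' x‖^2) (Set.Icc (0:ℝ) 1) := cg'.norm.pow 2
  have c3 : ContinuousOn (fun x => ‖g x‖^2) (Set.Icc (0:ℝ) 1) := cg.norm.pow 2
  have c4 : ContinuousOn (fun x => (inner ℝ (g' x) (g'' x) : ℝ)) (Set.Icc (0:ℝ) 1) :=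
    cg'.inner hcont
  have c5 : ContinuousOn (fun x => (inner ℝ (g x) (g'' x) : ℝ)) (Set.Icc (0:ℝ) 1) :=
    cg.inner hcont
  have c6 : ContinuousOn (fun x => (inner ℝ (g x) (g' x) : ℝ)) (Set.Icc (0:ℝ) 1) :=
    cg.inner cg'
  have m1 : IntervalIntegrable (fun x => ‖g'' x‖^2) volume 0 1 := c1.intervalIntegrable_of_Icc s01
  have m2 : IntervalIntegrable (fun x => ‖g' x‖^2) volume 0 1 := c2.intervalIntegrable_of_Icc s01
  have m3 : IntervalIntegrable (fun x => ‖g x‖^2) volume 0 1 := c3.intervalIntegrable_of_Icc s01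
  have m4 : IntervalIntegrable (fun x => (inner ℝ (g' x) (g'' x) : ℝ)) volume 0 1 := c4.intervalIntegrable_of_Icc s01
  have m5 : IntervalIntegrable (fun x => (inner ℝ (g x) (g'' x) : ℝ)) volume 0 1 := c5.intervalIntegrable_of_Icc s01
  have m6 : IntervalIntegrable (fun x => (inner ℝ (g x) (g' x) : ℝ)) volume 0 1 := c6.intervalIntegrable_of_Icc s01
  set A := ∫ x in (0:ℝ)..1, ‖g' x‖^2 with hA
  set B := ∫ x in (0:ℝ)..1, ‖g x‖^2 with hB
  set I := ∫ x in (0:ℝ)..1, ‖g'' x‖^2 with hI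
  set t := ‖g' 1‖ with ht
  set s := ‖g 1‖ with hs
  set c := (inner ℝ (g 1) (g' 1) : ℝ) with hcdef
  -- integration identities
  have F1 : ∫ x in (0:ℝ)..1, (inner ℝ (g' x) (g'' x) : ℝ) = t^2/2 := by
    have e : ∫ x in (0:ℝ)..1, (fun x => 2 * (inner ℝ (g' x) (g'' x) : ℝ)) x
        = ‖g' 1‖^2 - ‖g' 0‖^2 :=
      ftcE s01 (fun x hx => (hg'' x hx).norm_sq) (c4.const_smul (2:ℝ))
    rw [h0'] at e
    simp only [norm_zero] at e
    rw [intervalIntegral.integral_const_mul] at e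
    rw [ht]
    linarith [e]
  have F2 : ∫ x in (0:ℝ)..1, (inner ℝ (g x) (g' x) : ℝ) = s^2/2 := by
    have e : ∫ x in (0:ℝ)..1, (fun x => 2 * (inner ℝ (g x) (g' x) : ℝ)) x
        = ‖g 1‖^2 - ‖g 0‖^2 :=
      ftcE s01 (fun x hx => (hg' x hx).norm_sq) (c6.const_smul (2:ℝ))
    rw [h0] at e
    simp only [norm_zero] at e
    rw [intervalIntegral.integral_const_mul] at e
    rw [hs]
    linarith [e]
  have F3 : ∫ x in (0:ℝ)..1, (inner ℝ (g x) (g'' x) : ℝ) = c - A := by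
    have e : ∫ x in (0:ℝ)..1, (fun x => (inner ℝ (g x) (g'' x) : ℝ) + (inner ℝ (g' x) (g' x) : ℝ)) x
        = (inner ℝ (g 1) (g' 1) : ℝ) - (inner ℝ (g 0) (g' 0) : ℝ) := by
      refine ftcE s01 (fun x hx => (hg' x hx).inner ℝ (hg'' x hx)) ?_
      exact c5.add (cg'.inner cg')
    rw [h0, h0'] at e
    simp only [inner_zero_left, sub_zero] at e
    have e2 : ∫ x in (0:ℝ)..1, ((inner ℝ (g x) (g'' x) : ℝ) + (inner ℝ (g' x) (g' x) : ℝ))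
        = (∫ x in (0:ℝ)..1, (inner ℝ (g x) (g'' x) : ℝ)) + ∫ x in (0:ℝ)..1, (inner ℝ (g' x) (g' x) : ℝ) :=
      intervalIntegral.integral_add m5 ((cg'.inner cg').intervalIntegrable_of_Icc s01)
    have e3 : (∫ x in (0:ℝ)..1, (inner ℝ (g' x) (g' x) : ℝ)) = A := by
      rw [hA]
      apply intervalIntegral.integral_congr
      intro x _
      exact real_inner_self_eq_norm_sq _
    rw [e2, e3] at e
    rw [hcdef]
    linarith [e]
  -- expansion of the left integral
  have hJ : (∫ x in (0:ℝ)..1, ‖g'' x + (ξ : ℂ) * g' x + (η : ℂ) * g x‖ ^ 2)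
      = I + ξ^2*A + η^2*B + 2*ξ*(t^2/2) + 2*η*(c - A) + 2*(ξ*η)*(s^2/2) := by
    have hcg : ∀ x ∈ Set.uIcc (0:ℝ) 1, ‖g'' x + (ξ : ℂ) * g' x + (η : ℂ) * g x‖ ^ 2
        = ‖g'' x‖^2 + ξ^2*‖g' x‖^2 + η^2*‖g x‖^2
          + 2*ξ*(inner ℝ (g' x) (g'' x) : ℝ) + 2*η*(inner ℝ (g x) (g'' x) : ℝ)
          + 2*(ξ*η)*(inner ℝ (g x) (g' x) : ℝ) := fun x _ => expand_sq ξ η (g'' x) (g' x) (g x)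
    rw [intervalIntegral.integral_congr hcg]
    have i2 : IntervalIntegrable (fun x => ξ^2*‖g' x‖^2) volume 0 1 := m2.const_mul _
    have i3 : IntervalIntegrable (fun x => η^2*‖g x‖^2) volume 0 1 := m3.const_mul _
    have i4 : IntervalIntegrable (fun x => 2*ξ*(inner ℝ (g' x) (g'' x) : ℝ)) volume 0 1 := m4.const_mul _
    have i5 : IntervalIntegrable (fun x => 2*η*(inner ℝ (g x) (g'' x) : ℝ)) volume 0 1 := m5.const_mul _
    have i6 : IntervalIntegrable (fun x => 2*(ξ*η)*(inner ℝ (g x) (g' x) : ℝ)) volume 0 1 := m6.const_mul _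
    rw [intervalIntegral.integral_add ((((m1.add i2).add i3).add i4).add i5) i6,
        intervalIntegral.integral_add (((m1.add i2).add i3).add i4) i5,
        intervalIntegral.integral_add ((m1.add i2).add i3) i4,
        intervalIntegral.integral_add (m1.add i2) i3,
        intervalIntegral.integral_add m1 i2,
        intervalIntegral.integral_const_mul, intervalIntegral.integral_const_mul,
        intervalIntegral.integral_const_mul, intervalIntegral.integral_const_mul,
        intervalIntegral.integral_const_mul, F1, F2, F3]
  -- analytic facts
  have hπ : (0:ℝ) < π := pi_pos
  have hp : (0:ℝ) < π^2 := by positivity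
  have F4 : π^2/4 * B ≤ A := wirtinger hg' cg' h0
  have F5 : s^2 ≤ A := by
    have hgint : IntervalIntegrable g' volume 0 1 := cg'.intervalIntegrable_of_Icc s01
    have hftc : ∫ y in (0:ℝ)..1, g' y = g 1 - g 0 := ftcE s01 hg' cg'
    rw [h0, sub_zero] at hftc
    set m := ∫ x in (0:ℝ)..1, ‖g' x‖ with hm
    have hm0 : 0 ≤ m := intervalIntegral.integral_nonneg s01 (fun u _ => norm_nonneg _)
    have hsm : s ≤ m := by
      rw [hs, ← hftc, hm]
      exact intervalIntegral.norm_integral_le_integral_norm s01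
    have hnormint : IntervalIntegrable (fun x => ‖g' x‖) volume 0 1 :=
      cg'.norm.intervalIntegrable_of_Icc s01
    have hvar : 0 ≤ A - m^2 := by
      have hnn : (0:ℝ) ≤ ∫ x in (0:ℝ)..1, (‖g' x‖ - m)^2 :=
        intervalIntegral.integral_nonneg s01 (fun u _ => sq_nonneg _)
      have hexp : ∫ x in (0:ℝ)..1, (‖g' x‖ - m)^2
          = A - 2*m*m + m^2 := by
        have : ∀ x ∈ Set.uIcc (0:ℝ) 1, (‖g' x‖ - m)^2 = ‖g' x‖^2 - 2*m*‖g' x‖ + m^2 :=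
          fun x _ => by ring
        rw [intervalIntegral.integral_congr this,
            intervalIntegral.integral_add (m2.sub (hnormint.const_mul (2*m)))
              (intervalIntegrable_const),
            intervalIntegral.integral_sub m2 (hnormint.const_mul (2*m)),
            intervalIntegral.integral_const_mul, intervalIntegral.integral_const]
        rw [← hA, ← hm]
        simp
        try ring
      nlinarith [hnn, hexp]
    nlinarith [hsm, hm0, norm_nonneg (g 1)]
  have F6 : c ≤ s*t := real_inner_le_norm (g 1) (g' 1)
  have hA0 : 0 ≤ A := intervalIntegral.integral_nonneg s01 (fun u _ => sq_nonneg _)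
  have hB0 : 0 ≤ B := intervalIntegral.integral_nonneg s01 (fun u _ => sq_nonneg _)
  have hs0 : 0 ≤ s := norm_nonneg _
  have ht0 : 0 ≤ t := norm_nonneg _
  -- algebra
  have hη : 0 ≤ η := by
    have hd : 0 ≤ 4*η^2/π^2 := by positivity
    nlinarith [h2, hd, sq_nonneg ξ]
  have h2' : 4*η^2 - 2*η*π^2 + ξ^2*π^2 ≤ 0 := by
    have hmul := mul_nonpos_of_nonpos_of_nonneg h2 hp.le
    have heq : (4 * η ^ 2 / π ^ 2 - 2 * η + ξ ^ 2) * π^2 = 4*η^2 - 2*η*π^2 + ξ^2*π^2 := by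
      field_simp
      try ring
    linarith [hmul, heq.le, heq.ge]
  have h3' : 0 ≤ (4*ξ - π^2)*η^2 + (ξ^2 - 2*ξ)*η*π^2 + ξ^3*π^2 := by
    have hmul := mul_nonneg h3 hp.le
    have heq : ((4 * ξ / π ^ 2 - 1) * η ^ 2 + (ξ ^ 2 - 2 * ξ) * η + ξ ^ 3) * π^2
        = (4*ξ - π^2)*η^2 + (ξ^2 - 2*ξ)*η*π^2 + ξ^3*π^2 := by
      field_simp
      try ring
    linarith [hmul, heq.le, heq.ge]
  have F4' : π^2 * B ≤ 4 * A := by nlinarith [F4]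
  have hfin := final_algebra ξ η (π^2) A B s t c hp h1 hη h2' h3' F4' F5 F6
  rw [hJ]
  nlinarith [hfin]
end
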